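/- Let R, R_0, R_1, …, R_{n-1} be i.i.d. ℕ-valued random variables. Then P(⋂_{k=0}^{n-1} ⋃_{i=0}^{k} {R_i ≥ k+1-i}) ≥ ∏_{k=0}^{n-1} (1 - ∏_{i=0}^{k} P(R < i+1)). -/

import Mathlib

open MeasureTheory

open ProbabilityTheory
open scoped ENNReal

lemma intg {α : Type*} [MeasurableSpace α] (ν : Measure α) [IsFiniteMeasure ν]
    {f : α → ℝ} (hf : Measurable f) (h : ∀ x, |f x| ≤ 1) : Integrable f ν :=
  ⟨hf.aestronglyMeasurable, HasFiniteIntegral.of_bounded (C := 1)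
    (Filter.Eventually.of_forall (by simpa [Real.norm_eq_abs] using h))⟩

lemma cheb {α : Type*} [MeasurableSpace α] (ν : Measure α) [IsProbabilityMeasure ν]
    {f g : α → ℝ} (hf : Measurable f) (hg : Measurable g)
    (hfb : ∀ x, |f x| ≤ 1) (hgb : ∀ x, |g x| ≤ 1)
    (hmono : ∀ x y, 0 ≤ (f x - f y) * (g x - g y)) :
    (∫ x, f x ∂ν) * (∫ x, g x ∂ν) ≤ ∫ x, f x * g x ∂ν := by
  have hif : Integrable f ν := intg ν hf hfb
  have hig : Integrable g ν := intg ν hg hgb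
  have hifg : Integrable (fun x => f x * g x) ν := by
    refine intg ν (hf.mul hg) fun x => ?_
    rw [abs_mul]
    calc |f x| * |g x| ≤ 1 * 1 := mul_le_mul (hfb x) (hgb x) (abs_nonneg _) zero_le_one
      _ = 1 := one_mul 1
  set If := ∫ x, f x ∂ν with hIf
  set Ig := ∫ x, g x ∂ν with hIg
  set Ifg := ∫ x, f x * g x ∂ν with hIfg
  have h1 : ∀ x, ∫ y, (f x - f y) * (g x - g y) ∂ν
      = f x * g x - f x * Ig - g x * If + Ifg := by
    intro x
    have e : (fun y => (f x - f y) * (g x - g y))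
        = fun y => (f x * g x - f x * g y - g x * f y) + f y * g y := by
      funext y; ring
    have i2 : Integrable (fun y => f x * g y) ν := hig.const_mul _
    have i3 : Integrable (fun y => g x * f y) ν := hif.const_mul _
    have i1 : Integrable (fun y => f x * g x - f x * g y) ν := (integrable_const _).sub i2
    have i0 : Integrable (fun y => f x * g x - f x * g y - g x * f y) ν := i1.sub i3
    rw [e, integral_add i0 hifg, integral_sub i1 i3, integral_sub (integrable_const _) i2,
      integral_const, integral_const_mul, integral_const_mul]
    simp [hIf, hIg, hIfg]
  have key : 0 ≤ ∫ x, ∫ y, (f x - f y) * (g x - g y) ∂ν ∂ν :=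
    integral_nonneg fun x => integral_nonneg fun y => hmono x y
  have h2 : ∫ x, ∫ y, (f x - f y) * (g x - g y) ∂ν ∂ν = 2 * (Ifg - If * Ig) := by
    simp_rw [h1]
    have j2 : Integrable (fun x => f x * Ig) ν := hif.mul_const _
    have j3 : Integrable (fun x => g x * If) ν := hig.mul_const _
    have j1 : Integrable (fun x => f x * g x - f x * Ig) ν := hifg.sub j2
    have j0 : Integrable (fun x => f x * g x - f x * Ig - g x * If) ν := j1.sub j3
    rw [integral_add j0 (integrable_const _), integral_sub j1 j3, integral_sub hifg j2,
      integral_const, integral_mul_const, integral_mul_const]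
    simp [hIf, hIg, hIfg]; ring
  rw [h2] at key
  linarith

lemma harris (m : Measure ℕ) [IsProbabilityMeasure m] :
    ∀ (n : ℕ) (f g : (Fin n → ℕ) → ℝ),
      Monotone f → Monotone g →
      (∀ x, 0 ≤ f x) → (∀ x, f x ≤ 1) → (∀ x, 0 ≤ g x) → (∀ x, g x ≤ 1) →
      (∫ x, f x ∂(Measure.pi fun _ : Fin n => m)) * (∫ x, g x ∂(Measure.pi fun _ : Fin n => m))
        ≤ ∫ x, f x * g x ∂(Measure.pi fun _ : Fin n => m) := by
  intro n
  induction n with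
  | zero =>
    intro f g _ _ _ _ _ _
    have key : ∀ (h : (Fin 0 → ℕ) → ℝ),
        ∫ x, h x ∂(Measure.pi fun _ : Fin 0 => m) = h default := by
      intro h
      have e : (fun x => h x) = fun _ => h default :=
        funext fun x => congrArg h (Subsingleton.elim x default)
      rw [e, integral_const]; simp
    simp only [key]
    exact le_refl _
  | succ n ih =>
    intro f g hfm hgm hf0 hf1 hg0 hg1
    set π := Measure.pi fun _ : Fin n => m with hπ
    set ν := Measure.pi fun _ : Fin (n+1) => m with hν
    have hcons : ∀ (p : ℕ × (Fin n → ℕ)),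
        (MeasurableEquiv.piFinSuccAbove (fun _ : Fin (n+1) => ℕ) 0).symm p = Fin.cons p.1 p.2 := by
      intro p
      simp [MeasurableEquiv.piFinSuccAbove, Fin.insertNthEquiv, Fin.insertNth_zero]
    have mp : MeasurePreserving
        (MeasurableEquiv.piFinSuccAbove (fun _ : Fin (n+1) => ℕ) 0).symm (m.prod π) ν :=
      (measurePreserving_piFinSuccAbove (fun _ : Fin (n+1) => m) 0).symm _
    have key : ∀ (h : (Fin (n+1) → ℕ) → ℝ), (∀ x, |h x| ≤ 1) →
        ∫ x, h x ∂ν = ∫ x, ∫ y, h (Fin.cons x y) ∂π ∂m := by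
      intro h hb
      rw [← mp.integral_comp (MeasurableEquiv.measurableEmbedding _) h]
      have e : (fun p : ℕ × (Fin n → ℕ) =>
          h ((MeasurableEquiv.piFinSuccAbove (fun _ : Fin (n+1) => ℕ) 0).symm p))
          = fun p => h (Fin.cons p.1 p.2) := funext fun p => congrArg h (hcons p)
      rw [e, integral_prod]
      exact intg _ (measurable_of_countable _) fun p => hb _
    set F := fun x : ℕ => ∫ y, f (Fin.cons x y) ∂π with hF
    set G := fun x : ℕ => ∫ y, g (Fin.cons x y) ∂π with hG
    have hone : ∀ x : ℕ, ∫ (_ : Fin n → ℕ), (1:ℝ) ∂π = 1 := by intro x; simp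
    have hF0 : ∀ x, 0 ≤ F x := fun x => integral_nonneg fun y => hf0 _
    have hG0 : ∀ x, 0 ≤ G x := fun x => integral_nonneg fun y => hg0 _
    have hF1 : ∀ x, F x ≤ 1 := by
      intro x
      rw [← hone x]
      exact integral_mono (intg _ (measurable_of_countable _)
        (fun y => abs_le.2 ⟨by linarith [hf0 (Fin.cons x y)], hf1 _⟩))
        (integrable_const _) fun y => hf1 _
    have hG1 : ∀ x, G x ≤ 1 := by
      intro x
      rw [← hone x]
      exact integral_mono (intg _ (measurable_of_countable _)
        (fun y => abs_le.2 ⟨by linarith [hg0 (Fin.cons x y)], hg1 _⟩))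
        (integrable_const _) fun y => hg1 _
    have hconsle : ∀ (x x' : ℕ) (y : Fin n → ℕ), x ≤ x' →
        (Fin.cons x y : Fin (n+1) → ℕ) ≤ Fin.cons x' y := by
      intro x x' y h j
      cases j using Fin.cases <;> simp [h]
    have hconsle2 : ∀ (x : ℕ) (y y' : Fin n → ℕ), y ≤ y' →
        (Fin.cons x y : Fin (n+1) → ℕ) ≤ Fin.cons x y' := by
      intro x y y' h j
      cases j using Fin.cases with
      | zero => simp
      | succ j => simpa using h j
    have hFm : Monotone F := by
      intro x x' hxx
      exact integral_mono (intg _ (measurable_of_countable _)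
          (fun y => abs_le.2 ⟨by linarith [hf0 (Fin.cons x y)], hf1 _⟩))
        (intg _ (measurable_of_countable _)
          (fun y => abs_le.2 ⟨by linarith [hf0 (Fin.cons x' y)], hf1 _⟩))
        fun y => hfm (hconsle x x' y hxx)
    have hGm : Monotone G := by
      intro x x' hxx
      exact integral_mono (intg _ (measurable_of_countable _)
          (fun y => abs_le.2 ⟨by linarith [hg0 (Fin.cons x y)], hg1 _⟩))
        (intg _ (measurable_of_countable _)
          (fun y => abs_le.2 ⟨by linarith [hg0 (Fin.cons x' y)], hg1 _⟩))
        fun y => hgm (hconsle x x' y hxx)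
    have hfb : ∀ x, |f x| ≤ 1 := fun x => abs_le.2 ⟨by linarith [hf0 x], hf1 x⟩
    have hgb : ∀ x, |g x| ≤ 1 := fun x => abs_le.2 ⟨by linarith [hg0 x], hg1 x⟩
    have hfgb : ∀ x, |f x * g x| ≤ 1 := by
      intro x
      rw [abs_mul]
      calc |f x| * |g x| ≤ 1 * 1 := mul_le_mul (hfb x) (hgb x) (abs_nonneg _) zero_le_one
        _ = 1 := one_mul 1
    rw [key f hfb, key g hgb, key (fun x => f x * g x) hfgb]
    have step1 : ∫ x, F x * G x ∂m ≤ ∫ x, ∫ y, f (Fin.cons x y) * g (Fin.cons x y) ∂π ∂m := by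
      refine integral_mono (intg _ (measurable_of_countable _) ?_)
        (intg _ (measurable_of_countable _) ?_) ?_
      · intro x
        rw [abs_mul]
        calc |F x| * |G x| ≤ 1 * 1 := by
              refine mul_le_mul ?_ ?_ (abs_nonneg _) zero_le_one
              · exact abs_le.2 ⟨by linarith [hF0 x], hF1 x⟩
              · exact abs_le.2 ⟨by linarith [hG0 x], hG1 x⟩
          _ = 1 := one_mul 1
      · intro x
        rw [abs_le]
        constructor
        · refine le_trans (by norm_num) (integral_nonneg fun y => ?_)
          exact mul_nonneg (hf0 _) (hg0 _)
        · rw [← hone x]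
          exact integral_mono (intg _ (measurable_of_countable _) fun y => hfgb _)
            (integrable_const _) fun y =>
              mul_le_one₀ (hf1 _) (hg0 _) (hg1 _)
      · intro x
        exact ih (fun y => f (Fin.cons x y)) (fun y => g (Fin.cons x y))
          (fun y y' h => hfm (hconsle2 x y y' h))
          (fun y y' h => hgm (hconsle2 x y y' h))
          (fun y => hf0 _) (fun y => hf1 _) (fun y => hg0 _) (fun y => hg1 _)
    have step2 : (∫ x, F x ∂m) * (∫ x, G x ∂m) ≤ ∫ x, F x * G x ∂m := by
      refine cheb m (measurable_of_countable _) (measurable_of_countable _)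
        (fun x => abs_le.2 ⟨by linarith [hF0 x], hF1 x⟩)
        (fun x => abs_le.2 ⟨by linarith [hG0 x], hG1 x⟩) ?_
      intro x y
      rcases le_total x y with h | h
      · have h1 : F x - F y ≤ 0 := by linarith [hFm h]
        have h2 : G x - G y ≤ 0 := by linarith [hGm h]
        nlinarith
      · have h1 : 0 ≤ F x - F y := by linarith [hFm h]
        have h2 : 0 ≤ G x - G y := by linarith [hGm h]
        nlinarith
    exact le_trans step2 step1

lemma harris_sets (m : Measure ℕ) [IsProbabilityMeasure m] (n : ℕ)
    {ι : Type*} (S : Finset ι) (A : ι → Set (Fin n → ℕ)) (hA : ∀ i, IsUpperSet (A i)) :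
    ∏ i ∈ S, ((Measure.pi fun _ : Fin n => m) (A i)).toReal
      ≤ ((Measure.pi fun _ : Fin n => m) (⋂ i ∈ S, A i)).toReal := by
  classical
  induction S using Finset.induction_on with
  | empty => simp
  | insert a S hnot ih =>
    rw [Finset.prod_insert hnot, Finset.set_biInter_insert]
    set ν := Measure.pi fun _ : Fin n => m with hν
    have hmeas : ∀ s : Set (Fin n → ℕ), MeasurableSet s := fun s => s.to_countable.measurableSet
    have hind : ∀ s : Set (Fin n → ℕ), ∫ x, s.indicator (fun _ => (1:ℝ)) x ∂ν = (ν s).toReal := by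
      intro s
      rw [integral_indicator_const _ (hmeas s)]
      simp [Measure.real]
    have hindmono : ∀ s : Set (Fin n → ℕ), IsUpperSet s →
        Monotone (s.indicator (fun _ => (1:ℝ))) := by
      intro s hs x y hxy
      by_cases hx : x ∈ s
      · rw [Set.indicator_of_mem hx, Set.indicator_of_mem (hs hxy hx)]
      · rw [Set.indicator_of_notMem hx]
        exact Set.indicator_nonneg (fun _ _ => zero_le_one) y
    have hupperInter : IsUpperSet (⋂ i ∈ S, A i) := by
      intro x y hxy hx
      simp only [Set.mem_iInter] at hx ⊢
      exact fun i hi => hA i hxy (hx i hi)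
    have hh := harris m n ((A a).indicator (fun _ => (1:ℝ)))
      ((⋂ i ∈ S, A i).indicator (fun _ => (1:ℝ)))
      (hindmono _ (hA a)) (hindmono _ hupperInter)
      (fun x => Set.indicator_nonneg (fun _ _ => zero_le_one) x)
      (fun x => Set.indicator_le_self' (fun _ _ => zero_le_one) x |>.trans (by by_cases h : x ∈ A a <;> simp [h]))
      (fun x => Set.indicator_nonneg (fun _ _ => zero_le_one) x)
      (fun x => Set.indicator_le_self' (fun _ _ => zero_le_one) x |>.trans (by by_cases h : x ∈ ⋂ i ∈ S, A i <;> simp [h]))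
    rw [hind, hind] at hh
    have hprod : (fun x => (A a).indicator (fun _ => (1:ℝ)) x
        * (⋂ i ∈ S, A i).indicator (fun _ => (1:ℝ)) x)
        = (A a ∩ ⋂ i ∈ S, A i).indicator (fun _ => (1:ℝ)) := by
      funext x
      by_cases h1 : x ∈ A a <;> by_cases h2 : x ∈ ⋂ i ∈ S, A i <;>
        simp [Set.indicator_of_mem, Set.indicator_of_notMem, Set.mem_inter_iff, h1, h2]
    rw [hprod, hind] at hh
    calc (ν (A a)).toReal * ∏ i ∈ S, (ν (A i)).toReal
        ≤ (ν (A a)).toReal * (ν (⋂ i ∈ S, A i)).toReal :=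
          mul_le_mul_of_nonneg_left ih ENNReal.toReal_nonneg
      _ ≤ (ν (A a ∩ ⋂ i ∈ S, A i)).toReal := hh

lemma joint_law {Ω : Type*} [MeasurableSpace Ω] (μ : Measure Ω) [IsProbabilityMeasure μ]
    (n : ℕ) (R : Fin n → Ω → ℕ) (hmeas : ∀ i, Measurable (R i))
    (hind : ProbabilityTheory.iIndepFun R μ) :
    Measure.map (fun ω i => R i ω) μ = Measure.pi (fun i => Measure.map (R i) μ) := by
  apply Measure.ext_of_singleton
  intro x
  rw [Measure.map_apply (measurable_pi_lambda _ hmeas) (measurableSet_singleton x)]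
  have hpre : (fun ω i => R i ω) ⁻¹' {x} = ⋂ i ∈ Finset.univ, R i ⁻¹' {x i} := by
    ext ω
    simp [funext_iff]
  rw [hpre, hind.measure_inter_preimage_eq_mul Finset.univ
    (sets := fun i => {x i}) (fun i _ => measurableSet_singleton _),
    ← Set.univ_pi_singleton x, Measure.pi_pi]
  exact Finset.prod_congr rfl fun i _ =>
    (Measure.map_apply (hmeas i) (measurableSet_singleton _)).symm

/-- For i.i.d. ℕ-valued random variables `R 0, …, R (n-1)` with common distribution
that of `R0`, `P(⋂_{k<n} ⋃_{i≤k} {R i ≥ k+1-i}) ≥ ∏_{k<n} (1 - ∏_{i≤k} P(R0 < i+1))`. -/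
theorem stmt8 {Ω : Type*} [MeasurableSpace Ω] (μ : Measure Ω) [IsProbabilityMeasure μ]
    (n : ℕ) (R : Fin n → Ω → ℕ) (R0 : Ω → ℕ)
    (hmeas : ∀ i, Measurable (R i)) (hmeas0 : Measurable R0)
    (hident : ∀ i, Measure.map (R i) μ = Measure.map R0 μ)
    (hind : ProbabilityTheory.iIndepFun R μ) :
    ∏ k : Fin n, (1 - ∏ i ∈ Finset.range ((k : ℕ) + 1), μ {ω | R0 ω < i + 1})
      ≤ μ (⋂ k : Fin n, ⋃ i : Fin n, ⋃ (_ : i ≤ k),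
            {ω | (k : ℕ) + 1 - (i : ℕ) ≤ R i ω}) := by
  classical
  set m := Measure.map R0 μ with hm
  have : IsProbabilityMeasure m := Measure.isProbabilityMeasure_map hmeas0.aemeasurable
  set ν := Measure.pi fun _ : Fin n => m with hν
  set A : Fin n → Set (Fin n → ℕ) := fun k =>
    ⋃ i : Fin n, ⋃ (_ : i ≤ k), {x : Fin n → ℕ | (k : ℕ) + 1 - (i : ℕ) ≤ x i} with hA
  have hmeasN : ∀ s : Set (Fin n → ℕ), MeasurableSet s := fun s => s.to_countable.measurableSet
  -- event = preimage
  have hT : Measurable (fun ω i => R i ω) := measurable_pi_lambda _ hmeas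
  have hev : (⋂ k : Fin n, ⋃ i : Fin n, ⋃ (_ : i ≤ k),
      {ω | (k : ℕ) + 1 - (i : ℕ) ≤ R i ω}) = (fun ω i => R i ω) ⁻¹' (⋂ k, A k) := by
    ext ω
    simp [hA]
  have hlaw : Measure.map (fun ω i => R i ω) μ = ν := by
    rw [joint_law μ n R hmeas hind, hν]
    congr 1
    exact funext hident
  have hmu : μ (⋂ k : Fin n, ⋃ i : Fin n, ⋃ (_ : i ≤ k),
      {ω | (k : ℕ) + 1 - (i : ℕ) ≤ R i ω}) = ν (⋂ k, A k) := by
    rw [hev, ← hlaw, Measure.map_apply hT (hmeasN _)]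
  -- each factor equals ν (A k)
  have hterm : ∀ k : Fin n,
      (1 : ℝ≥0∞) - ∏ i ∈ Finset.range ((k : ℕ) + 1), μ {ω | R0 ω < i + 1} = ν (A k) := by
    intro k
    have hAc : (A k)ᶜ = Set.univ.pi
        (fun i : Fin n => if (i : ℕ) ≤ (k : ℕ) then {r : ℕ | r < (k : ℕ) + 1 - (i : ℕ)}
          else Set.univ) := by
      ext x
      simp only [hA, Set.mem_compl_iff, Set.mem_iUnion, Set.mem_setOf_eq, not_exists, not_le,
        Set.mem_pi, Set.mem_univ, true_implies]
      constructor
      · intro h i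
        split_ifs with hik
        · exact h i (by exact Fin.le_def.mpr hik)
        · trivial
      · intro h i hik
        have := h i
        rw [if_pos (Fin.le_def.mp hik)] at this
        exact this
    have hcompl : ν ((A k)ᶜ) = ∏ i ∈ Finset.range ((k : ℕ) + 1), μ {ω | R0 ω < i + 1} := by
      rw [hAc, hν, Measure.pi_pi]
      have e1 : ∀ i : Fin n,
          m (if (i : ℕ) ≤ (k : ℕ) then {r : ℕ | r < (k : ℕ) + 1 - (i : ℕ)} else Set.univ)
          = if (i : ℕ) ≤ (k : ℕ) then m {r : ℕ | r < (k : ℕ) + 1 - (i : ℕ)} else 1 := by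
        intro i
        split_ifs <;> simp
      simp_rw [e1]
      rw [Fin.prod_univ_eq_prod_range
        (fun i => if i ≤ (k : ℕ) then m {r : ℕ | r < (k : ℕ) + 1 - i} else 1) n]
      rw [← Finset.prod_subset (Finset.range_subset_range.mpr (Nat.succ_le_of_lt k.isLt))
        (fun i _ hi => if_neg (fun hle => hi (Finset.mem_range.mpr (by omega))))]
      have h2 : ∀ j ∈ Finset.range ((k : ℕ) + 1),
          (if j ≤ (k : ℕ) then m {r : ℕ | r < (k : ℕ) + 1 - j} else 1)
            = m {r : ℕ | r < ((k : ℕ) + 1 - 1 - j) + 1} := by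
        intro j hj
        have hjk := Finset.mem_range.mp hj
        rw [if_pos (by omega)]
        congr 1
        ext r
        simp only [Set.mem_setOf_eq]
        omega
      rw [Finset.prod_congr rfl h2,
        Finset.prod_range_reflect (fun j => m {r : ℕ | r < j + 1}) ((k : ℕ) + 1)]
      refine Finset.prod_congr rfl fun j _ => ?_
      rw [hm, Measure.map_apply hmeas0 (Set.to_countable _).measurableSet]
      rfl
    have hle1 : ν ((A k)ᶜ) = 1 - ν (A k) := prob_compl_eq_one_sub (hmeasN _)
    rw [← hcompl, hle1, ENNReal.sub_sub_cancel ENNReal.one_ne_top prob_le_one]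
  calc ∏ k : Fin n, ((1 : ℝ≥0∞) - ∏ i ∈ Finset.range ((k : ℕ) + 1), μ {ω | R0 ω < i + 1})
      = ∏ k : Fin n, ν (A k) := Finset.prod_congr rfl fun k _ => hterm k
    _ ≤ ν (⋂ k, A k) := by
        have hup : ∀ k, IsUpperSet (A k) := by
          intro k x y hxy hx
          simp only [hA, Set.mem_iUnion, Set.mem_setOf_eq] at hx ⊢
          obtain ⟨i, hik, hi⟩ := hx
          exact ⟨i, hik, le_trans hi (hxy i)⟩
        have h := harris_sets m n Finset.univ A hup
        have hbi : (⋂ i ∈ (Finset.univ : Finset (Fin n)), A i) = ⋂ k, A k := by simp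
        rw [hbi] at h
        rw [← ENNReal.toReal_le_toReal (by
            exact ENNReal.prod_ne_top fun k _ => measure_ne_top _ _) (measure_ne_top _ _),
          ENNReal.toReal_prod]
        exact h
    _ = μ _ := hmu.symm
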